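/- arXiv:2602.22980 — 3 statements merged into one kernel-verified Lean document; each statement's English description precedes it below -/
import Mathlib

section
/- The isolation number of the cycle C_n on n ≥ 3 vertices equals ⌈n/4⌉. -/
open SimpleGraph

/-- `v` lies in the closed neighbourhood of the set `D`. -/
def inClosedNbhd {V : Type*} (G : SimpleGraph V) (D : Set V) (v : V) : Prop :=
  ∃ d ∈ D, d = v ∨ G.Adj d v

/-- `D` is an isolating set of `G`: the graph induced on the vertices outside
`N[D]` has no edges. -/
def IsIsolating {V : Type*} (G : SimpleGraph V) (D : Set V) : Prop :=
  ∀ u v : V, G.Adj u v → inClosedNbhd G D u ∨ inClosedNbhd G D v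

/-- The isolation number of a finite graph. -/
noncomputable def iso {V : Type*} (G : SimpleGraph V) [Fintype V] : ℕ :=
  sInf {n | ∃ D : Finset V, D.card = n ∧ IsIsolating G ↑D}

/-- The graph obtained from `G` by subdividing each edge in `A` once; the new
(subdivision) vertices are the elements of `A`. -/
def subdivide {V : Type*} (G : SimpleGraph V) (A : Finset (Sym2 V)) :
    SimpleGraph (V ⊕ {e : Sym2 V // e ∈ A}) where
  Adj x y :=
    match x, y with
    | Sum.inl u, Sum.inl v => G.Adj u v ∧ s(u, v) ∉ A
    | Sum.inl u, Sum.inr e => u ∈ (e : Sym2 V)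
    | Sum.inr e, Sum.inl u => u ∈ (e : Sym2 V)
    | Sum.inr _, Sum.inr _ => False
  symm := by
    constructor
    rintro (u | e) (v | f) h <;> dsimp only at h ⊢ <;>
      first
        | exact ⟨h.1.symm, by rw [Sym2.eq_swap]; exact h.2⟩
        | exact h
        | exact h.elim
  loopless := by
    constructor
    rintro (u | e) h <;> dsimp only at h <;>
      first
        | exact G.irrefl h.1
        | exact h

/-- A graph is `(ι,q)`-critical. -/
def IotaCritical {V : Type*} (G : SimpleGraph V) [Fintype V] (q : ℕ) : Prop :=
  (∀ A : Finset (Sym2 V), ↑A ⊆ G.edgeSet → A.card = q →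
      iso G < iso (subdivide G A)) ∧
  (∃ A : Finset (Sym2 V), ↑A ⊆ G.edgeSet ∧ A.card = q - 1 ∧
      iso (subdivide G A) = iso G)

open Fin.NatCast Fin.CommRing

theorem stmt3 (n : ℕ) (hn : 3 ≤ n) :
    iso (SimpleGraph.cycleGraph n) = (n + 3) / 4 := by
  obtain ⟨m, rfl⟩ : ∃ m, n = m + 3 := ⟨n - 3, by omega⟩
  set k := (m + 3 + 3) / 4 with hkdef
  have hk1 : 1 ≤ k := by omega
  have hkn : m + 3 ≤ 4 * k := by omega
  have hnk : 4 * k ≤ m + 6 := by omega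
  have hadj : ∀ u v : Fin (m+3), (cycleGraph (m+3)).Adj u v ↔ u - v = 1 ∨ v - u = 1 :=
    fun u v => cycleGraph_adj (n := m+1)
  -- the candidate isolating set
  set D : Finset (Fin (m+3)) := (Finset.range k).image (fun i => ((4*i : ℕ) : Fin (m+3)))
    with hDdef
  have hmemD : ∀ j, j < k → ((4*j : ℕ) : Fin (m+3)) ∈ D := by
    intro j hj
    exact Finset.mem_image_of_mem _ (Finset.mem_range.mpr hj)
  have hcardD : D.card = k := by
    rw [hDdef, Finset.card_image_of_injOn, Finset.card_range]
    intro i hi j hj hij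
    simp only [Finset.coe_range, Set.mem_Iio] at hi hj
    have hi' : 4*i < m+3 := by omega
    have hj' : 4*j < m+3 := by omega
    have := congrArg Fin.val hij
    rw [Fin.val_cast_of_lt hi', Fin.val_cast_of_lt hj'] at this
    omega
  set P : Fin (m+3) → Prop := inClosedNbhd (cycleGraph (m+3)) ↑D with hPdef
  have hP0 : ∀ j, j < k → P ((4*j : ℕ) : Fin (m+3)) :=
    fun j hj => ⟨_, Finset.mem_coe.mpr (hmemD j hj), Or.inl rfl⟩
  have hP1 : ∀ j, j < k → P (((4*j : ℕ) : Fin (m+3)) + 1) :=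
    fun j hj => ⟨_, Finset.mem_coe.mpr (hmemD j hj),
      Or.inr (by rw [hadj]; right; rw [add_sub_cancel_left])⟩
  have hPm : ∀ j, j < k → P (((4*j : ℕ) : Fin (m+3)) - 1) :=
    fun j hj => ⟨_, Finset.mem_coe.mpr (hmemD j hj),
      Or.inr (by rw [hadj]; left; rw [sub_sub_cancel])⟩
  -- key lemma for residue 3
  have L3 : ∀ b : ℕ, b % 4 = 3 → b ≤ m + 3 → P ((b : ℕ) : Fin (m+3)) := by
    intro b hb3 hbm
    by_cases hq : b / 4 + 1 < k
    · have : ((b : ℕ) : Fin (m+3)) = ((4*(b/4+1) : ℕ) : Fin (m+3)) - 1 := by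
        have h1 : (4*(b/4+1) : ℕ) = b + 1 := by omega
        rw [h1]; push_cast; ring
      rw [this]; exact hPm _ hq
    · -- b = 4k - 1, and m+3 ∈ {4k-1, 4k}
      have hb : b = 4*k - 1 := by omega
      by_cases hm : m + 3 = 4*k
      · have h1 : ((b : ℕ) : Fin (m+3)) = ((4*0 : ℕ) : Fin (m+3)) - 1 := by
          have hb1 : b + 1 = m + 3 := by omega
          have h2 : ((b : ℕ) : Fin (m+3)) + 1 = 0 := by
            rw [← Nat.cast_one, ← Nat.cast_add, hb1]; exact Fin.natCast_self _
          have h3 : ((4*0 : ℕ) : Fin (m+3)) = 0 := by norm_num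
          rw [h3]; linear_combination h2
        rw [h1]; exact hPm 0 hk1
      · -- m + 3 = 4k - 1 = b
        have hb2 : b = m + 3 := by omega
        have h1 : ((b : ℕ) : Fin (m+3)) = ((4*0 : ℕ) : Fin (m+3)) := by
          rw [hb2, Fin.natCast_self]; norm_num
        rw [h1]; exact hP0 0 hk1
  have hmain : ∀ u : Fin (m+3), P u ∨ P (u + 1) := by
    intro u
    have hu : ((u.val : ℕ) : Fin (m+3)) = u := Fin.cast_val_eq_self u
    have hult : u.val < m + 3 := u.isLt
    rcases (show u.val % 4 = 0 ∨ u.val % 4 = 1 ∨ u.val % 4 = 2 ∨ u.val % 4 = 3 by omega)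
      with h | h | h | h
    · left
      have hq : u.val / 4 < k := by omega
      have he : u = ((4*(u.val/4) : ℕ) : Fin (m+3)) := by
        rw [← hu]; congr 1; omega
      rw [he]; exact hP0 _ hq
    · left
      have hq : u.val / 4 < k := by omega
      have he : u = ((4*(u.val/4) : ℕ) : Fin (m+3)) + 1 := by
        have h2 : u.val = 4*(u.val/4) + 1 := by omega
        conv_lhs => rw [← hu, h2]
        push_cast; ring
      rw [he]; exact hP1 _ hq
    · right
      have he : u + 1 = ((u.val + 1 : ℕ) : Fin (m+3)) := by
        push_cast [Fin.cast_val_eq_self]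
        ring
      rw [he]; exact L3 (u.val + 1) (by omega) (by omega)
    · left
      rw [← hu]; exact L3 u.val (by omega) (by omega)
  have hiso : IsIsolating (cycleGraph (m+3)) ↑D := by
    intro u v huv
    rw [hadj] at huv
    rcases huv with h | h
    · -- u = v + 1
      have hu : u = v + 1 := by linear_combination h
      rcases hmain v with hv | hv1
      · exact Or.inr hv
      · exact Or.inl (hu ▸ hv1)
    · -- v = u + 1
      have hv : v = u + 1 := by linear_combination h
      rcases hmain u with hu | hu1
      · exact Or.inl hu
      · exact Or.inr (hv ▸ hu1)
  have hub : k ∈ {c | ∃ E : Finset (Fin (m+3)), E.card = c ∧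
      IsIsolating (cycleGraph (m+3)) ↑E} := ⟨D, hcardD, hiso⟩
  -- lower bound
  have hlow : ∀ c ∈ {c | ∃ E : Finset (Fin (m+3)), E.card = c ∧
      IsIsolating (cycleGraph (m+3)) ↑E}, k ≤ c := by
    rintro c ⟨E, hc, hI⟩
    have hfour : ∀ v : Fin (m+3), v ∈ E ∨ v + 1 ∈ E ∨ v + 2 ∈ E ∨ v + 3 ∈ E := by
      intro v
      by_contra hcon
      push_neg at hcon
      obtain ⟨h0, h1, h2, h3⟩ := hcon
      have hadj12 : (cycleGraph (m+3)).Adj (v+1) (v+2) := by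
        rw [hadj]; right; ring_nf
      rcases hI _ _ hadj12 with ⟨d, hd, hcase⟩ | ⟨d, hd, hcase⟩ <;>
        rw [Finset.mem_coe] at hd
      · rcases hcase with rfl | hA
        · exact h1 hd
        · rw [hadj] at hA
          rcases hA with he | he
          · exact h2 ((show d = v + 2 by linear_combination he) ▸ hd)
          · exact h0 ((show d = v by linear_combination -he) ▸ hd)
      · rcases hcase with rfl | hA
        · exact h2 hd
        · rw [hadj] at hA
          rcases hA with he | he
          · exact h3 ((show d = v + 3 by linear_combination he) ▸ hd)
          · exact h1 ((show d = v + 1 by linear_combination -he) ▸ hd)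
    have hsub : (Finset.univ : Finset (Fin (m+3))) ⊆
        E.biUnion (fun d => ({d, d - 1, d - 2, d - 3} : Finset (Fin (m+3)))) := by
      intro v _
      rw [Finset.mem_biUnion]
      rcases hfour v with h | h | h | h
      · exact ⟨v, h, by simp⟩
      · refine ⟨v+1, h, ?_⟩
        simp only [Finset.mem_insert, Finset.mem_singleton]
        right; left; ring
      · refine ⟨v+2, h, ?_⟩
        simp only [Finset.mem_insert, Finset.mem_singleton]
        right; right; left; ring
      · refine ⟨v+3, h, ?_⟩
        simp only [Finset.mem_insert, Finset.mem_singleton]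
        right; right; right; ring
    have h1 : (Finset.univ : Finset (Fin (m+3))).card = m + 3 := by simp
    have h2 := Finset.card_le_card hsub
    have h3 := Finset.card_biUnion_le (s := E)
      (t := fun d => ({d, d - 1, d - 2, d - 3} : Finset (Fin (m+3))))
    have h4 : ∀ d : Fin (m+3), ({d, d - 1, d - 2, d - 3} : Finset (Fin (m+3))).card ≤ 4 := by
      intro d
      have i1 := Finset.card_insert_le d ({d - 1, d - 2, d - 3} : Finset (Fin (m+3)))
      have i2 := Finset.card_insert_le (d-1) ({d - 2, d - 3} : Finset (Fin (m+3)))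
      have i3 := Finset.card_insert_le (d-2) ({d - 3} : Finset (Fin (m+3)))
      have i4 : ({d - 3} : Finset (Fin (m+3))).card = 1 := Finset.card_singleton _
      omega
    have h5 : ∑ d ∈ E, ({d, d - 1, d - 2, d - 3} : Finset (Fin (m+3))).card ≤ 4 * c := by
      calc ∑ d ∈ E, ({d, d - 1, d - 2, d - 3} : Finset (Fin (m+3))).card
          ≤ ∑ _d ∈ E, 4 := Finset.sum_le_sum (fun d _ => h4 d)
        _ = 4 * c := by rw [Finset.sum_const, hc, smul_eq_mul, mul_comm]
    rw [h1] at h2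
    omega
  rw [iso]
  exact le_antisymm (Nat.sInf_le hub) (le_csInf ⟨k, hub⟩ hlow)
end

section
/- If G is a path on n ≥ 4 vertices, then the isolation subdivision number sd_ι(G) equals 1 if n ≡ 1 (mod 4), 2 if n ≡ 0 (mod 4), 3 if n ≡ 3 (mod 4), and 4 if n ≡ 2 (mod 4). -/
open SimpleGraph

/-- The isolation subdivision number of a graph. -/
noncomputable def sdi {V : Type*} (G : SimpleGraph V) [Fintype V] : ℕ :=
  sInf {k | ∃ A : Finset (Sym2 V), ↑A ⊆ G.edgeSet ∧ A.card = k ∧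
    iso G < iso (subdivide G A)}

lemma iso_set_nonempty {V : Type*} (G : SimpleGraph V) [Fintype V] :
    {n | ∃ D : Finset V, D.card = n ∧ IsIsolating G ↑D}.Nonempty := by
  classical
  exact ⟨(Finset.univ : Finset V).card, Finset.univ, rfl,
    fun u v _ => Or.inl ⟨u, by simp, Or.inl rfl⟩⟩

lemma iso_le {V : Type*} (G : SimpleGraph V) [Fintype V] (D : Finset V)
    (h : IsIsolating G ↑D) : iso G ≤ D.card :=
  Nat.sInf_le ⟨D, rfl, h⟩

lemma le_iso {V : Type*} (G : SimpleGraph V) [Fintype V] (q : ℕ)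
    (h : ∀ D : Finset V, IsIsolating G ↑D → q ≤ D.card) : q ≤ iso G :=
  le_csInf (iso_set_nonempty G) (by rintro b ⟨D, rfl, hD⟩; exact h D hD)

lemma iso_le_of_iso {V W : Type*} [Fintype V] [Fintype W] {G : SimpleGraph V}
    {H : SimpleGraph W} (ψ : G ≃g H) : iso H ≤ iso G := by
  classical
  apply le_iso
  intro D hD
  have hiso : IsIsolating H ↑(D.image ψ) := by
    intro u v huv
    have huv' : G.Adj (ψ.symm u) (ψ.symm v) := by
      rw [← ψ.map_adj_iff]; simpa using huv
    rcases hD _ _ huv' with ⟨d, hd, hc⟩ | ⟨d, hd, hc⟩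
    · refine Or.inl ⟨ψ d, Finset.mem_image_of_mem _ hd, ?_⟩
      rcases hc with h | h
      · left; rw [h]; simp
      · right; have := ψ.map_adj_iff.2 h; simpa using this
    · refine Or.inr ⟨ψ d, Finset.mem_image_of_mem _ hd, ?_⟩
      rcases hc with h | h
      · left; rw [h]; simp
      · right; have := ψ.map_adj_iff.2 h; simpa using this
  calc iso H ≤ (D.image ψ).card := iso_le H _ hiso
    _ = D.card := Finset.card_image_of_injective _ ψ.injective

lemma iso_congr {V W : Type*} [Fintype V] [Fintype W] {G : SimpleGraph V}
    {H : SimpleGraph W} (φ : G ≃g H) : iso G = iso H :=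
  le_antisymm (iso_le_of_iso φ.symm) (iso_le_of_iso φ)

lemma iso_path (m : ℕ) : iso (pathGraph m) = (m + 2) / 4 := by
  classical
  apply le_antisymm
  · -- upper bound
    rcases Nat.eq_zero_or_pos m with rfl | hm
    · have : IsIsolating (pathGraph 0) ↑(∅ : Finset (Fin 0)) := by
        intro u v _; exact u.elim0
      simpa using iso_le (pathGraph 0) ∅ this
    · set q := (m + 2) / 4 with hq
      set g : ℕ → Fin m := fun j => ⟨min (4 * j + 2) (m - 1), by omega⟩ with hg
      set D : Finset (Fin m) := (Finset.range q).image g with hD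
      have key : ∀ a : ℕ, ∀ ha : a + 1 < m,
          inClosedNbhd (pathGraph m) ↑D ⟨a, by omega⟩ ∨
          inClosedNbhd (pathGraph m) ↑D ⟨a + 1, by omega⟩ := by
        intro a ha
        have hjq : a / 4 < q := by omega
        have hgm : g (a / 4) ∈ D := by
          rw [hD]; exact Finset.mem_image_of_mem g (Finset.mem_range.2 hjq)
        have hdv : (g (a / 4)).val = min (4 * (a / 4) + 2) (m - 1) := rfl
        by_cases hcase : (g (a / 4)).val ≤ a + 1
        · left
          refine ⟨g (a / 4), hgm, ?_⟩
          have hge : a ≤ (g (a / 4)).val + 1 := by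
            rw [hdv]; omega
          have : (g (a / 4)).val = a ∨ (g (a / 4)).val + 1 = a ∨ a + 1 = (g (a / 4)).val := by
            omega
          rcases this with h | h | h
          · left; exact Fin.ext h
          · right; rw [pathGraph_adj]; left; exact h
          · right; rw [pathGraph_adj]; right; exact h
        · right
          refine ⟨g (a / 4), hgm, ?_⟩
          have hle : (g (a / 4)).val ≤ a + 2 := by rw [hdv]; omega
          have : (a + 1) + 1 = (g (a / 4)).val := by omega
          right; rw [pathGraph_adj]; right; exact this
      have hiso : IsIsolating (pathGraph m) ↑D := by
        intro u v huv
        rw [pathGraph_adj] at huv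
        rcases huv with h | h
        · have := key u.val (by omega)
          have hv' : (⟨u.val + 1, by omega⟩ : Fin m) = v := Fin.ext h
          rcases this with h1 | h2
          · exact Or.inl h1
          · exact Or.inr (hv' ▸ h2)
        · have := key v.val (by omega)
          have hu' : (⟨v.val + 1, by omega⟩ : Fin m) = u := Fin.ext h
          rcases this with h1 | h2
          · exact Or.inr h1
          · exact Or.inl (hu' ▸ h2)
      calc iso (pathGraph m) ≤ D.card := iso_le _ D hiso
        _ ≤ q := le_trans Finset.card_image_le (by simp)
  · -- lower bound
    apply le_iso
    intro D hD
    set q := (m + 2) / 4 with hq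
    rcases Nat.eq_zero_or_pos q with h0 | hqpos
    · omega
    have hm2 : 4 * (q - 1) + 1 < m := by omega
    have hP : ∀ j, j < q → ∃ d : Fin m, d ∈ D ∧ 4 * j ≤ d.val + 1 ∧ d.val ≤ 4 * j + 2 := by
      intro j hj
      have hlt : 4 * j + 1 < m := by omega
      have hadj : (pathGraph m).Adj ⟨4 * j, by omega⟩ ⟨4 * j + 1, hlt⟩ := by
        rw [pathGraph_adj]; left; rfl
      rcases hD _ _ hadj with ⟨d, hd, hc⟩ | ⟨d, hd, hc⟩
      · refine ⟨d, by simpa using hd, ?_⟩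
        rcases hc with h | h
        · have : d.val = 4 * j := by rw [h]
          omega
        · rw [pathGraph_adj] at h; simp only at h; omega
      · refine ⟨d, by simpa using hd, ?_⟩
        rcases hc with h | h
        · have : d.val = 4 * j + 1 := by rw [h]
          omega
        · rw [pathGraph_adj] at h; simp only at h; omega
    haveI : Inhabited (Fin m) := ⟨⟨0, by omega⟩⟩
    choose! f hf1 hf2 hf3 using hP
    have : (Finset.range q).card ≤ D.card := by
      apply Finset.card_le_card_of_injOn f
      · intro j hj; exact hf1 j (Finset.mem_range.1 hj)
      · intro j1 h1 j2 h2 heq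
        simp only [Finset.coe_range, Set.mem_Iio] at h1 h2
        have a1 := hf2 j1 h1; have a2 := hf3 j1 h1
        have b1 := hf2 j2 h2; have b2 := hf3 j2 h2
        rw [heq] at a1 a2
        omega
    simpa using this


def lo {n : ℕ} (e : Sym2 (Fin n)) : ℕ :=
  Sym2.lift ⟨fun a b => min a.val b.val, fun a b => min_comm _ _⟩ e

lemma lo_mk {n : ℕ} (a b : Fin n) : lo s(a, b) = min a.val b.val := rfl

def cnt {n : ℕ} (A : Finset (Sym2 (Fin n))) (i : ℕ) : ℕ :=
  (A.filter (fun e => lo e < i)).card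

lemma cnt_mono {n : ℕ} (A : Finset (Sym2 (Fin n))) {i j : ℕ} (h : i ≤ j) :
    cnt A i ≤ cnt A j := by
  apply Finset.card_le_card
  intro e he
  simp only [Finset.mem_filter] at he ⊢
  exact ⟨he.1, lt_of_lt_of_le he.2 h⟩

lemma cnt_le {n : ℕ} (A : Finset (Sym2 (Fin n))) (i : ℕ) : cnt A i ≤ A.card :=
  Finset.card_le_card (Finset.filter_subset _ _)

section Subdiv

variable {n : ℕ} {A : Finset (Sym2 (Fin n))} (hA : ↑A ⊆ (pathGraph n).edgeSet)

include hA

lemma lo_spec {e : Sym2 (Fin n)} (he : e ∈ A) :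
    ∃ h : lo e + 1 < n, e = s((⟨lo e, by omega⟩ : Fin n), (⟨lo e + 1, h⟩ : Fin n)) := by
  have he' : e ∈ (pathGraph n).edgeSet := hA he
  induction e with
  | _ u v =>
    rw [SimpleGraph.mem_edgeSet, pathGraph_adj] at he'
    rcases he' with h | h
    · have hlo : lo s(u, v) = u.val := by rw [lo_mk]; omega
      have hn : lo s(u, v) + 1 < n := by rw [hlo, h]; exact v.isLt
      refine ⟨hn, ?_⟩
      have h1 : (⟨lo s(u, v), by omega⟩ : Fin n) = u := Fin.ext hlo
      have h2 : (⟨lo s(u, v) + 1, hn⟩ : Fin n) = v := Fin.ext (by simp only [Fin.val_mk]; omega)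
      rw [h1, h2]
    · have hlo : lo s(u, v) = v.val := by rw [lo_mk]; omega
      have hn : lo s(u, v) + 1 < n := by rw [hlo, h]; exact u.isLt
      refine ⟨hn, ?_⟩
      have h1 : (⟨lo s(u, v), by omega⟩ : Fin n) = v := Fin.ext hlo
      have h2 : (⟨lo s(u, v) + 1, hn⟩ : Fin n) = u := Fin.ext (by simp only [Fin.val_mk]; omega)
      rw [h1, h2, Sym2.eq_swap]

lemma lo_inj {e e' : Sym2 (Fin n)} (he : e ∈ A) (he' : e' ∈ A)
    (h : lo e = lo e') : e = e' := by
  obtain ⟨h1, hE1⟩ := lo_spec hA he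
  obtain ⟨h2, hE2⟩ := lo_spec hA he'
  rw [hE1, hE2]
  have hx : (⟨lo e, by omega⟩ : Fin n) = ⟨lo e', by omega⟩ := Fin.ext h
  have hy : (⟨lo e + 1, h1⟩ : Fin n) = ⟨lo e' + 1, h2⟩ := Fin.ext (by simp [h])
  rw [hx, hy]

lemma cnt_succ_of_mem {e : Sym2 (Fin n)} (he : e ∈ A) :
    cnt A (lo e + 1) = cnt A (lo e) + 1 := by
  classical
  have hset : A.filter (fun e' => lo e' < lo e + 1) =
      insert e (A.filter (fun e' => lo e' < lo e)) := by
    ext e'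
    simp only [Finset.mem_filter, Finset.mem_insert]
    constructor
    · rintro ⟨hmem, hlt⟩
      rcases Nat.lt_or_ge (lo e') (lo e) with h | h
      · exact Or.inr ⟨hmem, h⟩
      · exact Or.inl (lo_inj hA hmem he (by omega))
    · rintro (rfl | ⟨hmem, hlt⟩)
      · exact ⟨he, by omega⟩
      · exact ⟨hmem, by omega⟩
  rw [cnt, hset, Finset.card_insert_of_notMem (by simp)]
  rfl

omit hA in
lemma cnt_succ_of_not (i : ℕ) (h : ∀ e ∈ A, lo e ≠ i) :
    cnt A (i + 1) = cnt A i := by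
  unfold cnt
  congr 1
  apply Finset.filter_congr
  intro e hee
  have := h e hee
  constructor <;> intro <;> omega

omit hA in
lemma cnt_add_injective {x y : ℕ} (h : x + cnt A x = y + cnt A y) : x = y := by
  rcases lt_trichotomy x y with h1 | h1 | h1
  · have := cnt_mono A (le_of_lt h1)
    omega
  · exact h1
  · have := cnt_mono A (le_of_lt h1)
    omega

def sF (hA : ↑A ⊆ (pathGraph n).edgeSet) :
    (Fin n ⊕ {e : Sym2 (Fin n) // e ∈ A}) → Fin (n + A.card) := fun x =>
  match x with
  | Sum.inl i => ⟨i.val + cnt A i.val, by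
      have := cnt_le A i.val
      have := i.isLt
      omega⟩
  | Sum.inr e => ⟨lo e.val + 1 + cnt A (lo e.val), by
      obtain ⟨h1, _⟩ := lo_spec hA e.property
      have := cnt_le A (lo e.val)
      omega⟩

lemma sF_inl (i : Fin n) : (sF hA (Sum.inl i)).val = i.val + cnt A i.val := rfl

lemma sF_inr (e : {e : Sym2 (Fin n) // e ∈ A}) :
    (sF hA (Sum.inr e)).val = lo e.val + 1 + cnt A (lo e.val) := rfl

lemma sF_injective : Function.Injective (sF hA) := by
  rintro (i | ⟨e, he⟩) (j | ⟨e', he'⟩) h <;> have h' := congrArg Fin.val h <;>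
    simp only [sF_inl, sF_inr] at h'
  · exact congrArg Sum.inl (Fin.ext (cnt_add_injective h'))
  · exfalso
    rcases le_or_gt i.val (lo e') with h1 | h1
    · have := cnt_mono A h1; omega
    · have h2 := cnt_mono A (show lo e' + 1 ≤ i.val by omega)
      have h3 := cnt_succ_of_mem hA he'
      omega
  · exfalso
    rcases le_or_gt j.val (lo e) with h1 | h1
    · have := cnt_mono A h1; omega
    · have h2 := cnt_mono A (show lo e + 1 ≤ j.val by omega)
      have h3 := cnt_succ_of_mem hA he
      omega
  · have heq : lo e = lo e' :=
      cnt_add_injective (show lo e + cnt A (lo e) = lo e' + cnt A (lo e') by omega)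
    have : e = e' := lo_inj hA he he' heq
    subst this
    rfl

lemma sF_bijective : Function.Bijective (sF hA) := by
  classical
  rw [Fintype.bijective_iff_injective_and_card]
  refine ⟨sF_injective hA, ?_⟩
  simp [Fintype.card_coe]

lemma subdivide_path_iso :
    Nonempty ((subdivide (pathGraph n) A) ≃g pathGraph (n + A.card)) := by
  classical
  have main : ∀ x y : Fin n, x.val + cnt A x.val + 1 = y.val + cnt A y.val →
      x.val + 1 = y.val ∧ s(x, y) ∉ A := by
    intro x y hxy
    have hlt : x.val < y.val := by
      by_contra hcon
      have := cnt_mono A (show y.val ≤ x.val by omega)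
      omega
    have h1 := cnt_mono A (show x.val + 1 ≤ y.val from hlt)
    have h2 := cnt_mono A (show x.val ≤ x.val + 1 by omega)
    have heq : y.val = x.val + 1 ∧ cnt A (x.val + 1) = cnt A x.val := by omega
    refine ⟨heq.1.symm, ?_⟩
    intro hmem
    have hlo : lo s(x, y) = x.val := by rw [lo_mk]; omega
    have hstep := cnt_succ_of_mem hA hmem
    rw [hlo] at hstep
    omega
  have main2 : ∀ x y : Fin n, x.val + 1 = y.val → s(x, y) ∉ A →
      x.val + cnt A x.val + 1 = y.val + cnt A y.val := by
    intro x y hxy hmem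
    have hnone : ∀ e ∈ A, lo e ≠ x.val := by
      intro e heA hle
      apply hmem
      obtain ⟨hlt', hE⟩ := lo_spec hA heA
      have hx : x = (⟨lo e, Nat.lt_of_succ_lt hlt'⟩ : Fin n) := Fin.ext hle.symm
      have hy : y = (⟨lo e + 1, hlt'⟩ : Fin n) := Fin.ext (by simp only [Fin.val_mk]; omega)
      subst hx
      subst hy
      exact hE ▸ heA
    have hstep := cnt_succ_of_not (A := A) x.val hnone
    rw [← hxy]
    omega
  have hmix : ∀ (i : Fin n) (e : {e : Sym2 (Fin n) // e ∈ A}),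
      ((sF hA (Sum.inl i)).val + 1 = (sF hA (Sum.inr e)).val ∨
        (sF hA (Sum.inr e)).val + 1 = (sF hA (Sum.inl i)).val) ↔ i ∈ e.val := by
    intro i ⟨e, he⟩
    obtain ⟨hlt, hE⟩ := lo_spec hA he
    have hstep := cnt_succ_of_mem hA he
    have hmem : i ∈ e ↔ (i.val = lo e ∨ i.val = lo e + 1) := by
      conv_lhs => rw [hE]
      rw [Sym2.mem_iff]
      constructor
      · rintro (rfl | rfl) <;> simp
      · rintro (h | h)
        · exact Or.inl (Fin.ext h)
        · exact Or.inr (Fin.ext h)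
    simp only [sF_inl, sF_inr]
    rw [hmem]
    constructor
    · rintro (h | h)
      · left
        exact cnt_add_injective (show i.val + cnt A i.val = lo e + cnt A (lo e) by omega)
      · right
        exact cnt_add_injective
          (show i.val + cnt A i.val = (lo e + 1) + cnt A (lo e + 1) by omega)
    · rintro (h | h)
      · left; rw [h]; omega
      · right
        have : cnt A i.val = cnt A (lo e) + 1 := by rw [h, hstep]
        omega
  refine ⟨⟨Equiv.ofBijective (sF hA) (sF_bijective hA), @fun x y => ?_⟩⟩
  show (pathGraph (n + A.card)).Adj (sF hA x) (sF hA y) ↔ (subdivide (pathGraph n) A).Adj x y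
  rcases x with i | e <;> rcases y with j | e'
  · show _ ↔ ((pathGraph n).Adj i j ∧ s(i, j) ∉ A)
    rw [pathGraph_adj]
    constructor
    · rintro (h | h)
      · rw [sF_inl, sF_inl] at h
        obtain ⟨h1, h2⟩ := main i j h
        exact ⟨pathGraph_adj.2 (Or.inl h1), h2⟩
      · rw [sF_inl, sF_inl] at h
        obtain ⟨h1, h2⟩ := main j i h
        refine ⟨pathGraph_adj.2 (Or.inr h1), ?_⟩
        rw [Sym2.eq_swap]
        exact h2
    · rintro ⟨hadj, hmem⟩
      rcases pathGraph_adj.1 hadj with h | h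
      · left
        rw [sF_inl, sF_inl]
        exact main2 i j h hmem
      · right
        rw [sF_inl, sF_inl]
        exact main2 j i h (by rw [Sym2.eq_swap]; exact hmem)
  · show _ ↔ (i ∈ e'.val)
    rw [pathGraph_adj]
    exact hmix i e'
  · show _ ↔ (j ∈ e.val)
    rw [pathGraph_adj]
    rw [or_comm]
    exact hmix j e
  · show _ ↔ False
    rw [pathGraph_adj]
    simp only [iff_false]
    rintro (h | h) <;> rw [sF_inr, sF_inr] at h <;>
      obtain ⟨e1, he1⟩ := e <;> obtain ⟨e2, he2⟩ := e' <;>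
      simp only at h
    · have hs1 := cnt_succ_of_mem hA he1
      have hs2 := cnt_succ_of_mem hA he2
      rcases lt_trichotomy (lo e1) (lo e2) with h1 | h1 | h1
      · have := cnt_mono A (show lo e1 + 1 ≤ lo e2 from h1)
        omega
      · rw [h1] at h; omega
      · have := cnt_mono A (show lo e2 + 1 ≤ lo e1 from h1)
        omega
    · have hs1 := cnt_succ_of_mem hA he1
      have hs2 := cnt_succ_of_mem hA he2
      rcases lt_trichotomy (lo e1) (lo e2) with h1 | h1 | h1
      · have := cnt_mono A (show lo e1 + 1 ≤ lo e2 from h1)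
        omega
      · rw [h1] at h; omega
      · have := cnt_mono A (show lo e2 + 1 ≤ lo e1 from h1)
        omega

end Subdiv


lemma iso_subdivide_path {n : ℕ} {A : Finset (Sym2 (Fin n))}
    (hA : ↑A ⊆ (pathGraph n).edgeSet) :
    iso (subdivide (pathGraph n) A) = (n + A.card + 2) / 4 := by
  obtain ⟨φ⟩ := subdivide_path_iso hA
  rw [iso_congr φ, iso_path]

lemma exists_sub_edges (n t : ℕ) (ht : t < n) :
    ∃ A : Finset (Sym2 (Fin n)), ↑A ⊆ (pathGraph n).edgeSet ∧ A.card = t := by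
  classical
  rcases Nat.eq_zero_or_pos t with rfl | htpos
  · exact ⟨∅, by simp, rfl⟩
  have hn : 2 ≤ n := by omega
  set g : ℕ → Sym2 (Fin n) := fun i =>
    s((⟨min i (n - 2), by omega⟩ : Fin n), (⟨min i (n - 2) + 1, by omega⟩ : Fin n)) with hg
  refine ⟨(Finset.range t).image g, ?_, ?_⟩
  · intro e he
    simp only [Finset.coe_image, Set.mem_image, Finset.mem_coe, Finset.mem_range] at he
    obtain ⟨i, hi, rfl⟩ := he
    rw [hg]
    simp only [Set.mem_setOf_eq, SimpleGraph.mem_edgeSet, pathGraph_adj]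
    exact Or.inl trivial
  · rw [Finset.card_image_of_injOn, Finset.card_range]
    intro i hi j hj hij
    simp only [Finset.coe_range, Set.mem_Iio] at hi hj
    have hlo := congrArg lo hij
    rw [hg] at hlo
    simp only [lo_mk, Fin.val_mk] at hlo
    omega

lemma sdi_path (n t : ℕ) (ht1 : 1 ≤ t) (htn : t < n)
    (hgt : (n + 2) / 4 < (n + t + 2) / 4)
    (heq : ∀ k, k < t → (n + k + 2) / 4 = (n + 2) / 4) :
    sdi (pathGraph n) = t := by
  classical
  obtain ⟨A, hAsub, hAcard⟩ := exists_sub_edges n t htn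
  have hmem : t ∈ {k | ∃ A : Finset (Sym2 (Fin n)), ↑A ⊆ (pathGraph n).edgeSet ∧
      A.card = k ∧ iso (pathGraph n) < iso (subdivide (pathGraph n) A)} := by
    refine ⟨A, hAsub, hAcard, ?_⟩
    rw [iso_path, iso_subdivide_path hAsub, hAcard]
    exact hgt
  apply le_antisymm (Nat.sInf_le hmem)
  apply le_csInf ⟨t, hmem⟩
  rintro b ⟨B, hBsub, hBcard, hBlt⟩
  by_contra hcon
  push_neg at hcon
  rw [iso_path, iso_subdivide_path hBsub, hBcard, heq b hcon] at hBlt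
  omega

theorem stmt5 (n : ℕ) (hn : 4 ≤ n) :
    (n % 4 = 1 → sdi (SimpleGraph.pathGraph n) = 1) ∧
    (n % 4 = 0 → sdi (SimpleGraph.pathGraph n) = 2) ∧
    (n % 4 = 3 → sdi (SimpleGraph.pathGraph n) = 3) ∧
    (n % 4 = 2 → sdi (SimpleGraph.pathGraph n) = 4) := by
  refine ⟨fun h => ?_, fun h => ?_, fun h => ?_, fun h => ?_⟩
  · exact sdi_path n 1 le_rfl (by omega) (by omega) (fun k hk => by omega)
  · exact sdi_path n 2 (by omega) (by omega) (by omega) (fun k hk => by omega)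
  · exact sdi_path n 3 (by omega) (by omega) (by omega) (fun k hk => by omega)
  · exact sdi_path n 4 (by omega) (by omega) (by omega) (fun k hk => by omega)
end

section
/- If G is a connected (ι,1)-critical graph and D is a minimum isolating set of G, then D is a 3-packing: any two distinct vertices of D are at distance greater than 3 in G. -/
open SimpleGraph

/-- Key lemma: if both endpoints of an edge `s(p,q)` are covered by `D`
avoiding the edge itself, then `D` stays isolating after subdividing it. -/
lemma key_le {V : Type*} [Fintype V] (G : SimpleGraph V) (D : Finset V)
    (hiso : IsIsolating G ↑D) (p q : V)
    (hp : ∃ d ∈ D, d = p ∨ (G.Adj d p ∧ s(d, p) ≠ s(p, q)))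
    (hq : ∃ d ∈ D, d = q ∨ (G.Adj d q ∧ s(d, q) ≠ s(p, q))) :
    iso (subdivide G {s(p, q)}) ≤ D.card := by
  classical
  apply Nat.sInf_le
  refine Set.mem_setOf.2
    ⟨(D.image Sum.inl : Finset (V ⊕ {e : Sym2 V // e ∈ ({s(p, q)} : Finset (Sym2 V))})),
      Finset.card_image_of_injective _ Sum.inl_injective, ?_⟩
  have cover : ∀ u : V, (∃ d ∈ D, d = u ∨ (G.Adj d u ∧ s(d, u) ≠ s(p, q))) →
      inClosedNbhd (subdivide G {s(p, q)}) ↑(D.image Sum.inl : Finset (V ⊕ {e : Sym2 V // e ∈ ({s(p, q)} : Finset (Sym2 V))})) (Sum.inl u) := by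
    rintro u ⟨d, hd, h⟩
    refine ⟨Sum.inl d, by simpa using hd, ?_⟩
    rcases h with rfl | ⟨h1, h2⟩
    · exact Or.inl rfl
    · exact Or.inr ⟨h1, by simpa using h2⟩
  have coverPQ : ∀ u : V, u ∈ s(p, q) →
      inClosedNbhd (subdivide G {s(p, q)}) ↑(D.image Sum.inl : Finset (V ⊕ {e : Sym2 V // e ∈ ({s(p, q)} : Finset (Sym2 V))})) (Sum.inl u) := by
    intro u hu
    rcases Sym2.mem_iff.1 hu with rfl | rfl
    · exact cover _ hp
    · exact cover _ hq
  have coverGen : ∀ u : V, inClosedNbhd G ↑D u →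
      inClosedNbhd (subdivide G {s(p, q)}) ↑(D.image Sum.inl : Finset (V ⊕ {e : Sym2 V // e ∈ ({s(p, q)} : Finset (Sym2 V))})) (Sum.inl u) := by
    rintro u ⟨d, hd, h⟩
    rcases h with rfl | hadj
    · exact cover d ⟨d, hd, Or.inl rfl⟩
    · by_cases he : s(d, u) = s(p, q)
      · rcases Sym2.eq_iff.1 he with ⟨hd1, hu1⟩ | ⟨hd1, hu1⟩
        · exact coverPQ u (by rw [hu1]; simp)
        · exact coverPQ u (by rw [hu1]; simp)
      · exact cover u ⟨d, hd, Or.inr ⟨hadj, he⟩⟩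
  rintro (u | e) (v | f) hadj
  · have hadj' : G.Adj u v ∧ s(u, v) ∉ ({s(p, q)} : Finset (Sym2 V)) := hadj
    rcases hiso u v hadj'.1 with h | h
    · exact Or.inl (coverGen u h)
    · exact Or.inr (coverGen v h)
  · have hu : u ∈ (f : Sym2 V) := hadj
    have hf : (f : Sym2 V) = s(p, q) := Finset.mem_singleton.1 f.2
    exact Or.inl (coverPQ u (hf ▸ hu))
  · have hu : v ∈ (e : Sym2 V) := hadj
    have he : (e : Sym2 V) = s(p, q) := Finset.mem_singleton.1 e.2
    exact Or.inr (coverPQ v (he ▸ hu))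
  · exact hadj.elim

lemma key_false {V : Type*} [Fintype V] (G : SimpleGraph V)
    (hcrit : ∀ e ∈ G.edgeSet, iso G < iso (subdivide G {e}))
    (D : Finset V) (hiso : IsIsolating G ↑D) (hmin : D.card = iso G)
    (p q : V) (hpq : G.Adj p q)
    (hp : ∃ d ∈ D, d = p ∨ (G.Adj d p ∧ s(d, p) ≠ s(p, q)))
    (hq : ∃ d ∈ D, d = q ∨ (G.Adj d q ∧ s(d, q) ≠ s(p, q))) : False := by
  have h1 := hcrit s(p, q) (G.mem_edgeSet.2 hpq)
  have h2 := key_le G D hiso p q hp hq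
  omega

theorem stmt15 {V : Type*} [Fintype V] (G : SimpleGraph V) (hconn : G.Connected)
    (hcrit : ∀ e ∈ G.edgeSet, iso G < iso (subdivide G {e}))
    (D : Finset V) (hiso : IsIsolating G ↑D) (hmin : D.card = iso G) :
    ∀ x ∈ D, ∀ y ∈ D, x ≠ y → 3 < G.dist x y := by
  intro x hx y hy hxy
  by_contra hcon
  push_neg at hcon
  have hreach : G.Reachable x y := hconn.preconnected x y
  obtain ⟨w, hw⟩ := hreach.exists_walk_length_eq_dist
  have trivcov : ∀ z ∈ D, ∀ r : Sym2 V, ∃ d ∈ D, d = z ∨ (G.Adj d z ∧ s(d, z) ≠ r) :=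
    fun z hz r => ⟨z, hz, Or.inl rfl⟩
  cases w with
  | nil => exact hxy rfl
  | cons h1 w1 =>
    rename_i a
    cases w1 with
    | nil =>
      -- dist 1 : edge x y, both in D
      exact key_false G hcrit D hiso hmin x y h1
        (trivcov x hx _) (trivcov y hy _)
    | cons h2 w2 =>
      rename_i b
      cases w2 with
      | nil =>
        -- dist 2 : x - a - y
        by_cases haD : a ∈ D
        · exact key_false G hcrit D hiso hmin x a h1
            (trivcov x hx _) (trivcov a haD _)
        · refine key_false G hcrit D hiso hmin a y h2
            ⟨x, hx, Or.inr ⟨h1, ?_⟩⟩ (trivcov y hy _)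
          intro hEq
          rcases Sym2.eq_iff.1 hEq with ⟨rfl, rfl⟩ | ⟨rfl, -⟩
          · exact h1.ne rfl
          · exact hxy rfl
      | cons h3 w3 =>
        rename_i c
        cases w3 with
        | nil =>
          -- dist 3 : x - a - b - y
          have hdist : G.dist x y = 3 := by
            have := hcon
            simp only [Walk.length_cons, Walk.length_nil] at hw
            omega
          have hxb : x ≠ b := by
            rintro rfl
            have := G.dist_le (Walk.cons h3 Walk.nil)
            simp [hdist] at this
          have hay : a ≠ y := by
            rintro rfl
            have := G.dist_le (Walk.cons h1 Walk.nil)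
            simp [hdist] at this
          by_cases haD : a ∈ D
          · exact key_false G hcrit D hiso hmin x a h1
              (trivcov x hx _) (trivcov a haD _)
          by_cases hbD : b ∈ D
          · exact key_false G hcrit D hiso hmin b y h3
              (trivcov b hbD _) (trivcov y hy _)
          refine key_false G hcrit D hiso hmin a b h2
            ⟨x, hx, Or.inr ⟨h1, ?_⟩⟩ ⟨y, hy, Or.inr ⟨h3.symm, ?_⟩⟩
          · intro hEq
            rcases Sym2.eq_iff.1 hEq with ⟨rfl, -⟩ | ⟨rfl, -⟩
            · exact h1.ne rfl
            · exact hxb rfl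
          · intro hEq
            rcases Sym2.eq_iff.1 hEq with ⟨rfl, -⟩ | ⟨rfl, -⟩
            · exact hay rfl
            · exact h3.ne' rfl
        | cons h4 w4 =>
          simp only [Walk.length_cons] at hw
          omega
end
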